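/- Let 0 ≤ a < b ≤ 1, let f : ℝ → ℝ be a nonnegative integrable function with ∫_a^b f(ξ) dξ = 1, and let F(x) = ∫_a^x f(ξ) dξ. Let T ∈ ℕ, T ≥ 1, u_1,…,u_T ∈ (a,b), v ∈ (a,b), and ω_1 ≥ … ≥ ω_T ≥ 0. Define m_1 = a and m_j = max{a, u_1,…,u_{j−1}} for j ≥ 2. Suppose 1 = t_1 < t_2 < … < t_S ≤ T are indices such that u_{t_1} < u_{t_2} < … < u_{t_S}, m_{t_j} = u_{t_{j−1}} for j = 2,…,S, and u_l ≤ m_l for every l ∈ {1,…,T} \ {t_1,…,t_S}. Then, setting ω_{t_{S+1}} = 0, ∫_a^b ( 1 − max_{j=1,…,T}( ω_j 𝟙_{u_j > ξ} ) ) ( 1 − 𝟙_{v > ξ} ) f(ξ) dξ = 1 − F(v) − Σ_{j=1}^S ( ω_{t_j} − ω_{t_{j+1}} ) ( F(u_{t_j}) − F(min{u_{t_j}, v}) ). -/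

import Mathlib

open MeasureTheory

private lemma ind_integrable {a b c : ℝ} {f : ℝ → ℝ}
    (hf : IntervalIntegrable f volume a b) :
    IntervalIntegrable (fun x => (if x < c then (1:ℝ) else 0) * f x) volume a b := by
  have h : (fun x => (if x < c then (1:ℝ) else 0) * f x) = (Set.Iio c).indicator f := by
    funext x; by_cases h : x < c <;> simp [Set.indicator, h]
  rw [h, intervalIntegrable_iff]
  rw [intervalIntegrable_iff] at hf
  exact hf.indicator measurableSet_Iio

private lemma chi_F {a b c : ℝ} {f : ℝ → ℝ} (hac : a ≤ c) (hcb : c ≤ b)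
    (hf : IntervalIntegrable f volume a b) :
    ∫ x in a..b, (if x < c then (1:ℝ) else 0) * f x = ∫ x in a..c, f x := by
  have hfac : IntervalIntegrable f volume a c :=
    hf.mono_set (Set.uIcc_subset_uIcc (by simp [Set.uIcc_of_le (hac.trans hcb), hac.trans hcb])
      (by simp [Set.uIcc_of_le (hac.trans hcb), hac, hcb]))
  have hfcb : IntervalIntegrable f volume c b :=
    hf.mono_set (Set.uIcc_subset_uIcc (by simp [Set.uIcc_of_le (hac.trans hcb), hac, hcb])
      (by simp [Set.uIcc_of_le (hac.trans hcb), hac.trans hcb]))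
  have h1 : IntervalIntegrable (fun x => (if x < c then (1:ℝ) else 0) * f x) volume a c :=
    ind_integrable hfac
  have h2 : IntervalIntegrable (fun x => (if x < c then (1:ℝ) else 0) * f x) volume c b :=
    ind_integrable hfcb
  rw [← intervalIntegral.integral_add_adjacent_intervals h1 h2]
  have e2 : ∫ x in c..b, (if x < c then (1:ℝ) else 0) * f x = 0 := by
    rw [intervalIntegral.integral_congr (g := fun _ => (0:ℝ))]
    · simp
    · intro x hx
      rw [Set.uIcc_of_le hcb] at hx
      simp only [not_lt.mpr hx.1, if_false, zero_mul]
  have e1 : ∫ x in a..c, (if x < c then (1:ℝ) else 0) * f x = ∫ x in a..c, f x := by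
    apply intervalIntegral.integral_congr_ae
    have hne : ∀ᵐ x : ℝ ∂volume, x ≠ c := by
      rw [MeasureTheory.ae_iff]
      have : {x : ℝ | ¬ x ≠ c} = {c} := by ext x; simp
      rw [this]; exact Real.volume_singleton
    filter_upwards [hne] with x hx hmem
    rw [Set.uIoc_of_le hac] at hmem
    have : x < c := lt_of_le_of_ne hmem.2 hx
    simp [this]
  rw [e1, e2, add_zero]

private lemma telescope (g : ℕ → ℝ) : ∀ n m : ℕ, m ≤ n →
    ∑ j ∈ Finset.Icc m n, (g j - g (j+1)) = g m - g (n+1) := by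
  intro n
  induction n with
  | zero => intro m hm; interval_cases m; simp
  | succ n ih =>
    intro m hm
    rcases Nat.lt_or_ge m (n+1) with h | h
    · rw [Finset.sum_Icc_succ_top (by omega), ih m (by omega)]; ring
    · have : m = n + 1 := by omega
      subst this; simp

/-- Telescoped form of the `g = g_max` value-weighted theorem: with the hierarchy
`1 = t_1 < t_2 < … < t_S ≤ T` of indices with nonempty power intervals (each being
the actual precursor of the next, all other indices having empty power interval),
and the convention `ω_{t_{S+1}} = 0`,
`∫_a^b (1 - max_j ω_j 𝟙_{u_j > ξ})(1 - 𝟙_{v > ξ}) f(ξ) dξ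
= 1 - F(v) - ∑_{j=1}^S (ω_{t_j} - ω_{t_{j+1}})(F(u_{t_j}) - F(min{u_{t_j}, v}))`. -/
theorem stmt18 (a b : ℝ) (ha : 0 ≤ a) (hab : a < b) (hb : b ≤ 1)
    (f : ℝ → ℝ) (hf_nonneg : ∀ x, 0 ≤ f x)
    (hf_int : IntervalIntegrable f volume a b)
    (hf_one : (∫ ξ in a..b, f ξ) = 1)
    (F : ℝ → ℝ) (hF : ∀ x, F x = ∫ ξ in a..x, f ξ)
    (T : ℕ) (hT : 1 ≤ T)
    (u : ℕ → ℝ) (hu : ∀ j ∈ Finset.Icc 1 T, u j ∈ Set.Ioo a b)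
    (v : ℝ) (hv : v ∈ Set.Ioo a b)
    (ω : ℕ → ℝ) (hω_nonneg : ∀ j ∈ Finset.Icc 1 T, 0 ≤ ω j)
    (hω_mono : ∀ j, 1 ≤ j → j + 1 ≤ T → ω (j + 1) ≤ ω j)
    (m : ℕ → ℝ) (hm : ∀ j, m j = (Finset.Icc 1 (j - 1)).fold max a u)
    (S : ℕ) (hS : 1 ≤ S) (t : ℕ → ℕ)
    (ht1 : t 1 = 1)
    (ht_mono : ∀ j, 1 ≤ j → j + 1 ≤ S → t j < t (j + 1))
    (htS : t S ≤ T)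
    (hu_mono : ∀ j, 1 ≤ j → j + 1 ≤ S → u (t j) < u (t (j + 1)))
    (hprec : ∀ j, 1 ≤ j → j + 1 ≤ S → m (t (j + 1)) = u (t j))
    (hempty : ∀ l ∈ Finset.Icc 1 T, (∀ j ∈ Finset.Icc 1 S, t j ≠ l) → u l ≤ m l) :
    (∫ ξ in a..b,
        (1 - (Finset.Icc 1 T).sup' (Finset.nonempty_Icc.mpr hT)
            (fun j => ω j * (if ξ < u j then (1 : ℝ) else 0))) *
          (1 - (if ξ < v then (1 : ℝ) else 0)) * f ξ)
      = 1 - F v - ∑ j ∈ Finset.Icc 1 S,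
          (ω (t j) - if j + 1 ≤ S then ω (t (j + 1)) else 0) *
            (F (u (t j)) - F (min (u (t j)) v)) := by
  classical
  have hT' := Finset.nonempty_Icc.mpr hT
  -- monotonicity helpers
  have hω_anti : ∀ i j : ℕ, 1 ≤ i → i ≤ j → j ≤ T → ω j ≤ ω i := by
    intro i j hi hij hjT
    induction j with
    | zero => omega
    | succ n ih =>
      rcases Nat.lt_or_ge i (n+1) with h | h
      · exact le_trans (hω_mono n (by omega) hjT) (ih (by omega) (by omega))
      · have : i = n + 1 := by omega
        simp [this]
  have ht_mono' : ∀ i j : ℕ, 1 ≤ i → i ≤ j → j ≤ S → t i ≤ t j := by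
    intro i j hi hij hjS
    induction j with
    | zero => omega
    | succ n ih =>
      rcases Nat.lt_or_ge i (n+1) with h | h
      · exact le_trans (ih (by omega) (by omega)) (le_of_lt (ht_mono n (by omega) hjS))
      · have : i = n + 1 := by omega
        simp [this]
  have hut_le : ∀ i j : ℕ, 1 ≤ i → i ≤ j → j ≤ S → u (t i) ≤ u (t j) := by
    intro i j hi hij hjS
    induction j with
    | zero => omega
    | succ n ih =>
      rcases Nat.lt_or_ge i (n+1) with h | h
      · exact le_trans (ih (by omega) (by omega)) (le_of_lt (hu_mono n (by omega) hjS))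
      · have : i = n + 1 := by omega
        simp [this]
  have ht_mem : ∀ j, 1 ≤ j → j ≤ S → t j ∈ Finset.Icc 1 T := by
    intro j h1 h2
    rw [Finset.mem_Icc]
    constructor
    · have := ht_mono' 1 j le_rfl h1 h2; omega
    · exact le_trans (ht_mono' j S h1 h2 le_rfl) htS
  have hu_mem : ∀ j, 1 ≤ j → j ≤ S → u (t j) ∈ Set.Ioo a b :=
    fun j h1 h2 => hu _ (ht_mem j h1 h2)
  -- the "last hierarchy index before l" function
  set J : ℕ → ℕ := fun l => Nat.findGreatest (fun j => t j ≤ l) S with hJdef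
  have hJ1 : ∀ l, 1 ≤ l → 1 ≤ J l := fun l hl =>
    Nat.le_findGreatest hS (by simpa [ht1] using hl)
  have hJS : ∀ l, J l ≤ S := fun l => Nat.findGreatest_le S
  have hJt : ∀ l, 1 ≤ l → t (J l) ≤ l := fun l hl =>
    Nat.findGreatest_spec (P := fun j => t j ≤ l) hS (by simpa [ht1] using hl)
  have hJmono : ∀ i l : ℕ, i ≤ l → J i ≤ J l := fun i l hil =>
    Nat.findGreatest_mono (fun j hj => le_trans hj hil) le_rfl
  -- key domination lemma
  have hkey : ∀ l, 1 ≤ l → l ≤ T → u l ≤ u (t (J l)) := by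
    intro l
    induction l using Nat.strong_induction_on with
    | _ l ih =>
      intro hl1 hlT
      by_cases hcase : ∀ j ∈ Finset.Icc 1 S, t j ≠ l
      · have hml := hempty l (Finset.mem_Icc.mpr ⟨hl1, hlT⟩) hcase
        refine le_trans hml ?_
        rw [hm l, Finset.fold_max_le]
        constructor
        · exact le_of_lt (hu_mem _ (hJ1 l hl1) (hJS l)).1
        · intro i hi
          rw [Finset.mem_Icc] at hi
          have h1 : u i ≤ u (t (J i)) := ih i (by omega) hi.1 (by omega)
          exact le_trans h1 (hut_le _ _ (hJ1 i hi.1) (hJmono i l (by omega)) (hJS l))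
      · push_neg at hcase
        obtain ⟨j, hj, hjl⟩ := hcase
        rw [Finset.mem_Icc] at hj
        have hjJ : j ≤ J l := Nat.le_findGreatest hj.2 (le_of_eq hjl)
        calc u l = u (t j) := by rw [hjl]
          _ ≤ u (t (J l)) := hut_le j (J l) hj.1 hjJ (hJS l)
  -- coefficient and telescoping function
  set c : ℕ → ℝ := fun j => ω (t j) - if j + 1 ≤ S then ω (t (j + 1)) else 0 with hcdef
  set g : ℕ → ℝ := fun j => if j ≤ S then ω (t j) else 0 with hgdef
  -- pointwise identity for the sup
  have hpt : ∀ ξ : ℝ,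
      (Finset.Icc 1 T).sup' hT' (fun j => ω j * (if ξ < u j then (1:ℝ) else 0))
      = ∑ j ∈ Finset.Icc 1 S, c j * (if ξ < u (t j) then (1:ℝ) else 0) := by
    intro ξ
    by_cases hex : ∃ j, 1 ≤ j ∧ j ≤ S ∧ ξ < u (t j)
    · set j0 := Nat.find hex with hj0def
      obtain ⟨hj01, hj0S, hj0lt⟩ := Nat.find_spec hex
      have hiff : ∀ j, 1 ≤ j → j ≤ S → ((ξ < u (t j)) ↔ j0 ≤ j) := by
        intro j h1 h2
        constructor
        · intro h
          by_contra hlt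
          push_neg at hlt
          exact Nat.find_min hex hlt ⟨h1, h2, h⟩
        · intro h
          exact lt_of_lt_of_le hj0lt (hut_le _ _ hj01 h h2)
      have hsum : ∑ j ∈ Finset.Icc 1 S, c j * (if ξ < u (t j) then (1:ℝ) else 0)
          = ω (t j0) := by
        have hterm : ∀ j ∈ Finset.Icc 1 S, c j * (if ξ < u (t j) then (1:ℝ) else 0)
            = if j ∈ Finset.Icc j0 S then g j - g (j+1) else 0 := by
          intro j hj
          rw [Finset.mem_Icc] at hj
          by_cases h : j0 ≤ j
          · rw [if_pos (Finset.mem_Icc.mpr ⟨h, hj.2⟩), if_pos ((hiff j hj.1 hj.2).mpr h),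
              mul_one]
            simp only [hcdef, hgdef]
            rw [if_pos hj.2]
          · rw [if_neg (c := ξ < u (t j)) (by rw [hiff j hj.1 hj.2]; omega),
              if_neg (c := j ∈ Finset.Icc j0 S) (by rw [Finset.mem_Icc]; omega)]
            ring
        rw [Finset.sum_congr rfl hterm, Finset.sum_ite_mem]
        have hint : Finset.Icc 1 S ∩ Finset.Icc j0 S = Finset.Icc j0 S := by
          ext x; simp only [Finset.mem_inter, Finset.mem_Icc]; omega
        rw [hint, telescope g S j0 hj0S]
        simp [hgdef, hj0S]
        intro h; rw [hj0def] at h; omega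
      rw [hsum]
      apply le_antisymm
      · apply Finset.sup'_le
        intro l hl
        rw [Finset.mem_Icc] at hl
        by_cases h : ξ < u l
        · rw [if_pos h, mul_one]
          have htl : t j0 ≤ l := by
            by_contra hcon
            push_neg at hcon
            have hJlt : J l < j0 := by
              by_contra h2
              push_neg at h2
              have h3 := ht_mono' j0 (J l) hj01 h2 (hJS l)
              have h4 := hJt l hl.1
              omega
            have hne := Nat.find_min hex hJlt
            push_neg at hne
            have hle : u (t (J l)) ≤ ξ := hne (hJ1 l hl.1) (hJS l)
            have h5 := hkey l hl.1 hl.2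
            linarith
          exact hω_anti (t j0) l (Finset.mem_Icc.mp (ht_mem j0 hj01 hj0S)).1 htl hl.2
        · rw [if_neg h, mul_zero]
          exact hω_nonneg _ (ht_mem j0 hj01 hj0S)
      · have hle := Finset.le_sup' (fun j => ω j * (if ξ < u j then (1:ℝ) else 0))
          (ht_mem j0 hj01 hj0S)
        have hlt0 : ξ < u (t j0) := hj0lt
        simp only [hlt0, ↓reduceIte, mul_one] at hle
        exact hle
    · push_neg at hex
      have hall : ∀ l, 1 ≤ l → l ≤ T → u l ≤ ξ := by
        intro l h1 h2
        exact le_trans (hkey l h1 h2) (hex (J l) (hJ1 l h1) (hJS l))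
      have hsum0 : ∑ j ∈ Finset.Icc 1 S, c j * (if ξ < u (t j) then (1:ℝ) else 0) = 0 := by
        apply Finset.sum_eq_zero
        intro j hj
        rw [Finset.mem_Icc] at hj
        rw [if_neg (not_lt.mpr (hex j hj.1 hj.2)), mul_zero]
      rw [hsum0]
      apply le_antisymm
      · apply Finset.sup'_le
        intro l hl
        rw [Finset.mem_Icc] at hl
        rw [if_neg (not_lt.mpr (hall l hl.1 hl.2)), mul_zero]
      · have h1T : (1:ℕ) ∈ Finset.Icc 1 T := Finset.mem_Icc.mpr ⟨le_rfl, hT⟩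
        have hle := Finset.le_sup' (fun j => ω j * (if ξ < u j then (1:ℝ) else 0)) h1T
        have h0 : ¬ ξ < u 1 := not_lt.mpr (hall 1 le_rfl hT)
        simp only [h0, ↓reduceIte, mul_zero] at hle
        exact hle
  -- rewrite the integrand
  have hint_eq : ∀ ξ : ℝ,
      (1 - (Finset.Icc 1 T).sup' hT' (fun j => ω j * (if ξ < u j then (1:ℝ) else 0))) *
        (1 - (if ξ < v then (1:ℝ) else 0)) * f ξ
      = (f ξ - (if ξ < v then (1:ℝ) else 0) * f ξ)
        - ∑ j ∈ Finset.Icc 1 S, c j *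
            ((if ξ < u (t j) then (1:ℝ) else 0) * f ξ -
              (if ξ < min (u (t j)) v then (1:ℝ) else 0) * f ξ) := by
    intro ξ
    rw [hpt ξ]
    have hmin : ∀ j : ℕ, (if ξ < min (u (t j)) v then (1:ℝ) else 0)
        = (if ξ < u (t j) then (1:ℝ) else 0) * (if ξ < v then (1:ℝ) else 0) := by
      intro j
      by_cases h1 : ξ < u (t j) <;> by_cases h2 : ξ < v <;>
        simp [lt_min_iff, h1, h2]
    simp only [hmin]
    have hs : ∑ j ∈ Finset.Icc 1 S, c j *
          ((if ξ < u (t j) then (1:ℝ) else 0) * f ξ -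
            (if ξ < u (t j) then (1:ℝ) else 0) * (if ξ < v then (1:ℝ) else 0) * f ξ)
        = (∑ j ∈ Finset.Icc 1 S, c j * (if ξ < u (t j) then (1:ℝ) else 0)) *
            ((1 - (if ξ < v then (1:ℝ) else 0)) * f ξ) := by
      rw [Finset.sum_mul]
      exact Finset.sum_congr rfl (fun j _ => by ring)
    rw [hs]
    ring
  simp only [hint_eq]
  -- integrability
  have hIind : ∀ x : ℝ, IntervalIntegrable (fun ξ => (if ξ < x then (1:ℝ) else 0) * f ξ)
      volume a b := fun x => ind_integrable hf_int
  have hIterm : ∀ j ∈ Finset.Icc 1 S, IntervalIntegrable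
      (fun ξ => c j * ((if ξ < u (t j) then (1:ℝ) else 0) * f ξ -
        (if ξ < min (u (t j)) v then (1:ℝ) else 0) * f ξ)) volume a b :=
    fun j _ => ((hIind (u (t j))).sub (hIind (min (u (t j)) v))).const_mul (c j)
  have hIsum : IntervalIntegrable (fun ξ => ∑ j ∈ Finset.Icc 1 S, c j *
      ((if ξ < u (t j) then (1:ℝ) else 0) * f ξ -
        (if ξ < min (u (t j)) v then (1:ℝ) else 0) * f ξ)) volume a b := by
    have heq : (fun ξ => ∑ j ∈ Finset.Icc 1 S, c j *
        ((if ξ < u (t j) then (1:ℝ) else 0) * f ξ -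
          (if ξ < min (u (t j)) v then (1:ℝ) else 0) * f ξ))
        = ∑ j ∈ Finset.Icc 1 S, fun ξ => c j *
          ((if ξ < u (t j) then (1:ℝ) else 0) * f ξ -
            (if ξ < min (u (t j)) v then (1:ℝ) else 0) * f ξ) := by
      funext ξ; rw [Finset.sum_apply]
    rw [heq]
    exact IntervalIntegrable.sum _ hIterm
  rw [intervalIntegral.integral_sub (hf_int.sub (hIind v)) hIsum,
    intervalIntegral.integral_sub hf_int (hIind v),
    intervalIntegral.integral_finset_sum hIterm, hf_one]
  have hchi : ∀ x : ℝ, a ≤ x → x ≤ b →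
      ∫ ξ in a..b, (if ξ < x then (1:ℝ) else 0) * f ξ = F x := by
    intro x h1 h2
    rw [chi_F h1 h2 hf_int, ← hF]
  rw [hchi v (le_of_lt hv.1) (le_of_lt hv.2)]
  have hterm2 : ∀ j ∈ Finset.Icc 1 S,
      ∫ ξ in a..b, c j * ((if ξ < u (t j) then (1:ℝ) else 0) * f ξ -
        (if ξ < min (u (t j)) v then (1:ℝ) else 0) * f ξ)
      = c j * (F (u (t j)) - F (min (u (t j)) v)) := by
    intro j hj
    rw [Finset.mem_Icc] at hj
    have hu1 := hu_mem j hj.1 hj.2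
    rw [intervalIntegral.integral_const_mul,
      intervalIntegral.integral_sub (hIind (u (t j))) (hIind (min (u (t j)) v)),
      hchi (u (t j)) (le_of_lt hu1.1) (le_of_lt hu1.2),
      hchi (min (u (t j)) v) (le_min (le_of_lt hu1.1) (le_of_lt hv.1))
        (le_trans (min_le_left _ _) (le_of_lt hu1.2))]
  rw [Finset.sum_congr rfl hterm2]
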